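/- Let I be a proper monomial ideal of A with M(I) finite and with X_i ∉ I for every i, and suppose Fin n is partitioned into nonempty sets V_1,…,V_m such that X_i·X_j ∈ I whenever i and j lie in different parts. For each t, let R_t = A/(I + (X_j : j ∉ V_t)), and let ε_t : R_t → A/(X_1,…,X_n) be the natural quotient map. Then the natural ring homomorphism A/I → ∏_{t=1}^m R_t is injective, and its image is the fibre product subring {(r_1,…,r_m) : ε_s(r_s) = ε_t(r_t) for all s, t}; in particular A/I is ring-isomorphic to this fibre product of the m rings R_1,…,R_m. -/

import Mathlib

open MvPolynomial

/-- An ideal of `k[X_1,…,X_n]` is a *monomial ideal* if it is generated by a set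
of monomials. -/
def IsMonomialIdeal {k : Type*} [Field k] {n : ℕ}
    (I : Ideal (MvPolynomial (Fin n) k)) : Prop :=
  ∃ S : Set ((Fin n) →₀ ℕ),
    I = Ideal.span ((fun a => (monomial a (1 : k) : MvPolynomial (Fin n) k)) '' S)

/-- `M(I)`: the vertices of the survival complex of `A/I`. -/
def survivors {k : Type*} [Field k] {n : ℕ}
    (I : Ideal (MvPolynomial (Fin n) k)) : Set ((Fin n) →₀ ℕ) :=
  {a | a ≠ 0 ∧ monomial a (1 : k) ∉ I}

/-- The homogeneous maximal ideal `(X_1,…,X_n)` of `A`. -/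
noncomputable def maxIdeal (k : Type*) [Field k] (n : ℕ) : Ideal (MvPolynomial (Fin n) k) :=
  Ideal.span (Set.range (X : Fin n → MvPolynomial (Fin n) k))

/-- The ideal `I + (X_j : j ∉ V)` defining the factor `R_t` associated to a
part `V` of the variables. -/
noncomputable def componentIdeal {k : Type*} [Field k] {n : ℕ}
    (I : Ideal (MvPolynomial (Fin n) k)) (V : Set (Fin n)) :
    Ideal (MvPolynomial (Fin n) k) :=
  I ⊔ Ideal.span ((fun j => (X j : MvPolynomial (Fin n) k)) '' Vᶜ)

/-- If the variables are partitioned into parts `V_1,…,V_m` whose pairwise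
cross-products of variables lie in `I`, then `A/I` is the fibre product over
`k` of the rings `R_t = A/(I + (X_j : j ∉ V_t))`: the natural map
`A/I → ∏_t R_t` is injective with image the tuples whose residues agree. -/
theorem fibre_product_decomposition
    {k : Type*} [Field k] {n m : ℕ} (hn : 1 ≤ n)
    (I : Ideal (MvPolynomial (Fin n) k)) (hI : IsMonomialIdeal I)
    (hproper : I ≠ ⊤) (hfin : (survivors I).Finite)
    (hX : ∀ i : Fin n, (X i : MvPolynomial (Fin n) k) ∉ I)
    (V : Fin m → Set (Fin n))
    (hVne : ∀ t, (V t).Nonempty)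
    (hVdisj : ∀ s t : Fin m, s ≠ t → Disjoint (V s) (V t))
    (hVcover : (⋃ t, V t) = Set.univ)
    (hcross : ∀ s t : Fin m, s ≠ t → ∀ i ∈ V s, ∀ j ∈ V t,
      (X i : MvPolynomial (Fin n) k) * X j ∈ I) :
    Function.Injective
        (Pi.ringHom fun t : Fin m =>
          Ideal.Quotient.factor (le_sup_left : I ≤ componentIdeal I (V t))) ∧
      ∃ ε : ∀ t : Fin m,
          (MvPolynomial (Fin n) k ⧸ componentIdeal I (V t)) →+*
            (MvPolynomial (Fin n) k ⧸ maxIdeal k n),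
        (∀ t : Fin m, (ε t).comp (Ideal.Quotient.mk (componentIdeal I (V t))) =
          Ideal.Quotient.mk (maxIdeal k n)) ∧
        Set.range (Pi.ringHom fun t : Fin m =>
            Ideal.Quotient.factor (le_sup_left : I ≤ componentIdeal I (V t))) =
          {r : ∀ t : Fin m, MvPolynomial (Fin n) k ⧸ componentIdeal I (V t) |
            ∀ s t : Fin m, ε s (r s) = ε t (r t)} := by
  classical
  obtain ⟨S, hS⟩ := hI
  -- every generator exponent is nonzero
  have hS0 : ∀ s ∈ S, s ≠ (0 : Fin n →₀ ℕ) := by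
    intro s hs h0
    apply hproper
    rw [Ideal.eq_top_iff_one]
    have hmem : (monomial s (1 : k) : MvPolynomial (Fin n) k) ∈ I :=
      hS ▸ Ideal.subset_span ⟨s, hs, rfl⟩
    rwa [h0, monomial_zero', C_1] at hmem
  -- membership criterion for component ideals
  have hcomp : ∀ (W : Set (Fin n)) (p : MvPolynomial (Fin n) k),
      p ∈ componentIdeal I W ↔ ∀ a ∈ p.support,
        (∃ s ∈ S, s ≤ a) ∨ (∃ j, j ∉ W ∧ a j ≠ 0) := by
    intro W p
    have hrw : componentIdeal I W =
        Ideal.span ((fun s => (monomial s (1 : k) : MvPolynomial (Fin n) k)) ''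
          (S ∪ (fun j => Finsupp.single j 1) '' Wᶜ)) := by
      rw [componentIdeal, hS, Set.image_union, Ideal.span_union, Set.image_image]
      rfl
    rw [hrw, mem_ideal_span_monomial_image]
    refine forall₂_congr fun a _ => ?_
    constructor
    · rintro ⟨s, hs | ⟨j, hj, rfl⟩, hle⟩
      · exact Or.inl ⟨s, hs, hle⟩
      · refine Or.inr ⟨j, hj, ?_⟩
        have := Finsupp.single_le_iff.1 hle
        omega
    · rintro (⟨s, hs, hle⟩ | ⟨j, hj, hne⟩)
      · exact ⟨s, Or.inl hs, hle⟩
      · exact ⟨Finsupp.single j 1, Or.inr ⟨j, hj, rfl⟩,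
          Finsupp.single_le_iff.2 (Nat.one_le_iff_ne_zero.2 hne)⟩
  -- membership criterion for the maximal ideal
  have hmax : ∀ p : MvPolynomial (Fin n) k,
      p ∈ maxIdeal k n ↔ ∀ a ∈ p.support, (a : Fin n →₀ ℕ) ≠ 0 := by
    intro p
    rw [maxIdeal, ← Set.image_univ, mem_ideal_span_X_image]
    refine forall₂_congr fun a _ => ?_
    constructor
    · rintro ⟨i, _, hi⟩ h0; exact hi (by simp [h0])
    · intro h0
      obtain ⟨i, hi⟩ := Finsupp.ne_iff.1 h0
      exact ⟨i, Set.mem_univ i, by simpa using hi⟩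
  have hcomp_le : ∀ t : Fin m, componentIdeal I (V t) ≤ maxIdeal k n := by
    intro t p hp
    rw [hmax]
    intro a ha
    rcases (hcomp (V t) p).1 hp a ha with ⟨s, hs, hle⟩ | ⟨j, _, hj⟩
    · intro h0
      exact hS0 s hs (le_antisymm (h0 ▸ hle) (zero_le))
    · intro h0; exact hj (by simp [h0])
  -- there is at least one part
  have hi0 : (⟨0, hn⟩ : Fin n) ∈ ⋃ t, V t := hVcover ▸ Set.mem_univ _
  obtain ⟨t0, ht0⟩ := Set.mem_iUnion.1 hi0
  -- every variable lies in some part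
  have hcov : ∀ j : Fin n, ∃ t, j ∈ V t := fun j =>
    Set.mem_iUnion.1 (hVcover ▸ Set.mem_univ j)
  -- Injectivity
  have hinj : Function.Injective
      (Pi.ringHom fun t : Fin m =>
        Ideal.Quotient.factor (le_sup_left : I ≤ componentIdeal I (V t))) := by
    intro x y hxy
    obtain ⟨f, rfl⟩ := Ideal.Quotient.mk_surjective x
    obtain ⟨g, rfl⟩ := Ideal.Quotient.mk_surjective y
    rw [Ideal.Quotient.eq]
    set f' := f - g with hf'
    have hx' : ∀ t : Fin m, f' ∈ componentIdeal I (V t) := by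
      intro t
      have h := congrFun hxy t
      simp only [Pi.ringHom, RingHom.pi_apply, Ideal.Quotient.factor_mk] at h
      rw [Ideal.Quotient.eq] at h
      exact h
    rw [hS, mem_ideal_span_monomial_image]
    intro a ha
    by_contra hna
    push_neg at hna
    have key : ∀ t : Fin m, ∃ j, j ∉ V t ∧ a j ≠ 0 := by
      intro t
      rcases (hcomp (V t) f').1 (hx' t) a ha with ⟨s, hs, hle⟩ | h
      · exact absurd hle (hna s hs)
      · exact h
    obtain ⟨j0, hj0, haj0⟩ := key t0
    obtain ⟨s0, hjs0⟩ := hcov j0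
    obtain ⟨j1, hj1, haj1⟩ := key s0
    obtain ⟨t1, hjt1⟩ := hcov j1
    have hst : s0 ≠ t1 := fun h => hj1 (h ▸ hjt1)
    have hXX := hcross s0 t1 hst j0 hjs0 j1 hjt1
    have hj01 : j0 ≠ j1 := by
      intro h
      exact (hVdisj s0 t1 hst).ne_of_mem hjs0 hjt1 (congrArg id h)
    have hmono : (X j0 * X j1 : MvPolynomial (Fin n) k) =
        monomial (Finsupp.single j0 1 + Finsupp.single j1 1) 1 := by
      rw [X, X, monomial_mul, one_mul]
    rw [hmono, hS, mem_ideal_span_monomial_image] at hXX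
    have hsupp : (Finsupp.single j0 1 + Finsupp.single j1 1) ∈
        (monomial (Finsupp.single j0 1 + Finsupp.single j1 1) (1 : k)).support := by
      rw [support_monomial, if_neg (one_ne_zero)]
      exact Finset.mem_singleton_self _
    obtain ⟨s, hsS, hle⟩ := hXX _ hsupp
    refine hna s hsS (hle.trans ?_)
    intro i
    simp only [Finsupp.add_apply, Finsupp.single_apply, Finsupp.coe_zero, Pi.zero_apply]
    have h0' := Nat.one_le_iff_ne_zero.2 haj0
    have h1' := Nat.one_le_iff_ne_zero.2 haj1
    by_cases e0 : j0 = i <;> by_cases e1 : j1 = i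
    · exact absurd (e0.trans e1.symm) hj01
    · rw [if_pos e0, if_neg e1]; subst e0; omega
    · rw [if_neg e0, if_pos e1]; subst e1; omega
    · rw [if_neg e0, if_neg e1]; omega
  refine ⟨hinj, fun t => Ideal.Quotient.factor (hcomp_le t),
    fun t => Ideal.Quotient.factor_comp_mk _, ?_⟩
  ext r
  constructor
  · rintro ⟨x, rfl⟩ s t
    obtain ⟨f, rfl⟩ := Ideal.Quotient.mk_surjective x
    simp only [Pi.ringHom, RingHom.pi_apply, Ideal.Quotient.factor_mk]
    exact (Ideal.Quotient.factor_mk _ f).trans (Ideal.Quotient.factor_mk _ f).symm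
  · intro hr
    have hsurj : ∀ t, ∃ f, Ideal.Quotient.mk (componentIdeal I (V t)) f = r t :=
      fun t => Ideal.Quotient.mk_surjective (r t)
    choose f hf using hsurj
    set c : k := coeff 0 (f t0) with hc
    -- all constant terms agree
    have hceq : ∀ t, coeff 0 (f t) = c := by
      intro t
      have h := hr t t0
      rw [← hf t, ← hf t0] at h
      simp only [Ideal.Quotient.factor_mk] at h
      rw [Ideal.Quotient.eq] at h
      have h0 : coeff 0 (f t - f t0) = 0 := by
        by_contra hne
        exact ((hmax _).1 h 0 (mem_support_iff.2 hne)) rfl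
      rw [coeff_sub, sub_eq_zero] at h0
      exact h0
    -- the part of f t supported on V t with nonzero exponent
    set P : Fin m → (Fin n →₀ ℕ) → Prop :=
      fun t a => a ≠ 0 ∧ ∀ j, a j ≠ 0 → j ∈ V t with hP
    set g : Fin m → MvPolynomial (Fin n) k := fun t =>
      ∑ a ∈ (f t).support.filter (fun a => P t a), monomial a (coeff a (f t)) with hg
    have hgcoeff : ∀ t b, coeff b (g t) =
        if P t b then coeff b (f t) else 0 := by
      intro t b
      rw [hg]
      rw [coeff_sum]
      simp_rw [coeff_monomial]
      rw [Finset.sum_ite_eq' _ b (fun a => coeff a (f t))]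
      by_cases hPb : P t b
      · by_cases hbs : b ∈ (f t).support
        · rw [if_pos (Finset.mem_filter.2 ⟨hbs, hPb⟩), if_pos hPb]
        · rw [if_neg (fun h => hbs (Finset.mem_filter.1 h).1), if_pos hPb,
            notMem_support_iff.1 hbs]
      · rw [if_neg (fun h => hPb (Finset.mem_filter.1 h).2), if_neg hPb]
    set F : MvPolynomial (Fin n) k := C c + ∑ t, g t with hF
    refine ⟨Ideal.Quotient.mk I F, ?_⟩
    funext t
    simp only [Pi.ringHom, RingHom.pi_apply, Ideal.Quotient.factor_mk]
    change Ideal.Quotient.mk (componentIdeal I (V t)) F = _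
    rw [← hf t, Ideal.Quotient.eq]
    rw [hcomp (V t)]
    intro a ha
    rw [mem_support_iff, coeff_sub] at ha
    by_contra hcon
    push_neg at hcon
    obtain ⟨-, hsub⟩ := hcon
    -- every j in supp a lies in V t
    have hsubV : ∀ j, a j ≠ 0 → j ∈ V t := by
      intro j hj
      by_contra hjV
      exact hj (hsub j hjV)
    apply ha
    rw [sub_eq_zero]
    have hFa : coeff a F = (if a = 0 then c else 0) + ∑ s, coeff a (g s) := by
      rw [hF, coeff_add, coeff_C, coeff_sum]
      congr 1
      by_cases h : a = 0
      · rw [if_pos h.symm, if_pos h]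
      · rw [if_neg (Ne.symm h), if_neg h]
    by_cases h0 : a = 0
    · subst h0
      rw [hFa, hceq t]
      have : ∀ s, coeff (0 : Fin n →₀ ℕ) (g s) = 0 := by
        intro s
        rw [hgcoeff]
        rw [if_neg]
        rintro ⟨h, -⟩
        exact h rfl
      simp [this]
    · -- a ≠ 0 and supp a ⊆ V t
      have hPt : P t a := ⟨h0, hsubV⟩
      have hsum : ∑ s, coeff a (g s) = coeff a (f t) := by
        rw [Finset.sum_eq_single t]
        · rw [hgcoeff, if_pos hPt]
        · intro s _ hst
          rw [hgcoeff, if_neg]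
          rintro ⟨-, hsubs⟩
          obtain ⟨j, hj⟩ := Finsupp.ne_iff.1 h0
          have hj' : a j ≠ 0 := by simpa using hj
          exact (hVdisj s t hst).ne_of_mem (hsubs j hj') (hsubV j hj') rfl
        · intro h; exact absurd (Finset.mem_univ t) h
      rw [hFa, if_neg h0, zero_add, hsum]
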